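/- Suppose S ⊂ F_q^d with normalized surface measure dσ satisfies the restricted strong-type bound ‖1_E ∗ dσ‖_{L^r(dx)} ≤ C ‖1_E‖_{L^p(dx)} for every subset E ⊂ F_q^d, with C independent of E. Then for every function f : F_q^d → ℂ, ‖f ∗ dσ‖_{L^r(dx)} ≤ C' (log q) ‖f‖_{L^p(dx)} for a constant C' depending only on C, d, p. -/

import Mathlib

open Finset BigOperators
open scoped Classical

/-- Monotonicity of the weighted `L^r` functional. -/
lemma aux17_mono {X : Type*} [Fintype X] {r c : ℝ} (hc : 0 ≤ c) (hr : 0 < r)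
    {a b : X → ℝ} (ha : ∀ x, 0 ≤ a x) (hab : ∀ x, a x ≤ b x) :
    (c * ∑ x : X, a x ^ r) ^ ((1:ℝ)/r) ≤ (c * ∑ x : X, b x ^ r) ^ ((1:ℝ)/r) := by
  apply Real.rpow_le_rpow
  · exact mul_nonneg hc (Finset.sum_nonneg fun x _ => Real.rpow_nonneg (ha x) r)
  · apply mul_le_mul_of_nonneg_left _ hc
    exact Finset.sum_le_sum fun x _ => Real.rpow_le_rpow (ha x) (hab x) hr.le
  · positivity

/-- Two-term weighted Minkowski. -/
lemma aux17_mink2 {X : Type*} [Fintype X] {r c : ℝ} (hc : 0 ≤ c) (hr : 1 ≤ r)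
    (a b : X → ℝ) (ha : ∀ x, 0 ≤ a x) (hb : ∀ x, 0 ≤ b x) :
    (c * ∑ x : X, (a x + b x) ^ r) ^ ((1:ℝ)/r) ≤
      (c * ∑ x : X, a x ^ r) ^ ((1:ℝ)/r) + (c * ∑ x : X, b x ^ r) ^ ((1:ℝ)/r) := by
  have hr0 : (0:ℝ) < r := lt_of_lt_of_le one_pos hr
  set w : ℝ := c ^ ((1:ℝ)/r) with hw
  have hw0 : 0 ≤ w := Real.rpow_nonneg hc _
  have hwr : w ^ r = c := by
    rw [hw, ← Real.rpow_mul hc, one_div_mul_cancel hr0.ne', Real.rpow_one]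
  have key : ∀ v : X → ℝ, (∀ x, 0 ≤ v x) →
      c * ∑ x : X, v x ^ r = ∑ x : X, (w * v x) ^ r := by
    intro v hv
    rw [Finset.mul_sum]
    refine Finset.sum_congr rfl fun x _ => ?_
    rw [Real.mul_rpow hw0 (hv x), hwr]
  rw [key _ (fun x => add_nonneg (ha x) (hb x)), key a ha, key b hb]
  have h2 := Real.Lp_add_le_of_nonneg (s := (Finset.univ : Finset X))
    (f := fun x => w * a x) (g := fun x => w * b x) (p := r) hr
    (fun i _ => mul_nonneg hw0 (ha i)) (fun i _ => mul_nonneg hw0 (hb i))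
  simpa [mul_add] using h2

/-- Many-term weighted Minkowski. -/
lemma aux17_minkN {X : Type*} [Fintype X] {r c : ℝ} (hc : 0 ≤ c) (hr : 1 ≤ r)
    (n : ℕ) (v : ℕ → X → ℝ) (hv : ∀ j x, 0 ≤ v j x) :
    (c * ∑ x : X, (∑ j ∈ Finset.range n, v j x) ^ r) ^ ((1:ℝ)/r) ≤
      ∑ j ∈ Finset.range n, (c * ∑ x : X, v j x ^ r) ^ ((1:ℝ)/r) := by
  have hr0 : (0:ℝ) < r := lt_of_lt_of_le one_pos hr
  induction n with
  | zero =>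
      simp [Real.zero_rpow hr0.ne', one_div, Real.zero_rpow (inv_ne_zero hr0.ne')]
  | succ n ih =>
      have h1 : (c * ∑ x : X, (∑ j ∈ Finset.range (n+1), v j x) ^ r) ^ ((1:ℝ)/r) ≤
          (c * ∑ x : X, (∑ j ∈ Finset.range n, v j x) ^ r) ^ ((1:ℝ)/r) +
            (c * ∑ x : X, v n x ^ r) ^ ((1:ℝ)/r) := by
        have := aux17_mink2 (X := X) hc hr (fun x => ∑ j ∈ Finset.range n, v j x)
          (fun x => v n x) (fun x => Finset.sum_nonneg fun j _ => hv j x) (fun x => hv n x)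
        simpa [Finset.sum_range_succ] using this
      rw [Finset.sum_range_succ]
      exact le_trans h1 (add_le_add_left ih _)

/-- Pulling out a nonnegative scalar. -/
lemma aux17_scale {X : Type*} [Fintype X] {r c k : ℝ} (hc : 0 ≤ c) (hr : 0 < r) (hk : 0 ≤ k)
    (w : X → ℝ) (hw : ∀ x, 0 ≤ w x) :
    (c * ∑ x : X, (k * w x) ^ r) ^ ((1:ℝ)/r) = k * (c * ∑ x : X, w x ^ r) ^ ((1:ℝ)/r) := by
  have h1 : ∀ x : X, (k * w x) ^ r = k ^ r * w x ^ r := fun x => Real.mul_rpow hk (hw x)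
  simp_rw [h1]
  rw [← Finset.mul_sum, show c * (k ^ r * ∑ x : X, w x ^ r) = k ^ r * (c * ∑ x : X, w x ^ r) by ring,
    Real.mul_rpow (Real.rpow_nonneg hk r)
      (mul_nonneg hc (Finset.sum_nonneg fun x _ => Real.rpow_nonneg (hw x) r)),
    ← Real.rpow_mul hk, mul_one_div_cancel hr.ne', Real.rpow_one]

set_option maxHeartbeats 1000000 in
/-- from restricted strong-type to strong type with a `log q` loss.
If `‖1_E ∗ dσ‖_{L^r} ≤ C‖1_E‖_{L^p}` for all sets `E`, then
`‖f ∗ dσ‖_{L^r} ≤ C' (log q) ‖f‖_{L^p}` for all functions `f`, where `C'` depends only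
on `C`, `d`, `p` (not on `q`, `S`, or `f`). -/
theorem statement17 (d : ℕ) (p r C : ℝ) (hp : 1 ≤ p) (hr : 1 ≤ r) (hC : 0 < C) :
    ∃ C' : ℝ, 0 < C' ∧
      ∀ (F : Type) [Field F] [Fintype F], 2 ≤ Fintype.card F →
        ∀ S : Finset (Fin d → F), S.Nonempty →
          (∀ E : Finset (Fin d → F),
            (((Fintype.card F : ℝ) ^ d)⁻¹ *
                ∑ x : Fin d → F,
                  ‖(S.card : ℂ)⁻¹ * ∑ y ∈ S, (if x - y ∈ E then (1 : ℂ) else 0)‖ ^ r) ^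
                ((1 : ℝ) / r) ≤
              C * (((Fintype.card F : ℝ) ^ d)⁻¹ *
                  ∑ x : Fin d → F, ‖(if x ∈ E then (1 : ℂ) else 0)‖ ^ p) ^ ((1 : ℝ) / p)) →
          ∀ f : (Fin d → F) → ℂ,
            (((Fintype.card F : ℝ) ^ d)⁻¹ *
                ∑ x : Fin d → F, ‖(S.card : ℂ)⁻¹ * ∑ y ∈ S, f (x - y)‖ ^ r) ^
                ((1 : ℝ) / r) ≤
              C' * Real.log (Fintype.card F) *
                (((Fintype.card F : ℝ) ^ d)⁻¹ *
                    ∑ x : Fin d → F, ‖f x‖ ^ p) ^ ((1 : ℝ) / p) := by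
  have hp0 : (0:ℝ) < p := lt_of_lt_of_le one_pos hp
  have hr0 : (0:ℝ) < r := lt_of_lt_of_le one_pos hr
  have hlog2 : (0:ℝ) < Real.log 2 := Real.log_pos one_lt_two
  have hcanp : ∀ a : ℝ, 0 ≤ a → (a ^ p) ^ ((1:ℝ)/p) = a := fun a ha => by
    rw [← Real.rpow_mul ha, mul_one_div_cancel hp0.ne', Real.rpow_one]
  have hcanr : ∀ a : ℝ, 0 ≤ a → (a ^ r) ^ ((1:ℝ)/r) = a := fun a ha => by
    rw [← Real.rpow_mul ha, mul_one_div_cancel hr0.ne', Real.rpow_one]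
  refine ⟨(1 + 4 * C * (d:ℝ)) / Real.log 2, by positivity, ?_⟩
  intro F _ _ hq S hS hyp f
  set Q : ℝ := (Fintype.card F : ℝ) with hQdef
  have hQ2 : (2:ℝ) ≤ Q := by rw [hQdef]; exact_mod_cast hq
  have hQ0 : (0:ℝ) < Q := by linarith
  set N : ℝ := Q ^ d with hNdef
  have hN1 : (1:ℝ) ≤ N := one_le_pow₀ (by linarith)
  have hN0 : (0:ℝ) < N := by linarith
  have hC0 : (0:ℝ) ≤ N⁻¹ := by positivity
  have hL : Real.log 2 ≤ Real.log Q := Real.log_le_log (by norm_num) hQ2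
  set t : ℝ := (N⁻¹ * ∑ x : Fin d → F, ‖f x‖ ^ p) ^ ((1:ℝ)/p) with htdef
  clear_value Q N t
  by_cases hf0 : ∀ x : Fin d → F, f x = 0
  · have hz : ∀ x : Fin d → F, ‖(S.card : ℂ)⁻¹ * ∑ y ∈ S, f (x - y)‖ ^ r = 0 := by
      intro x
      rw [Finset.sum_eq_zero (fun y _ => hf0 _), mul_zero, norm_zero, Real.zero_rpow hr0.ne']
    rw [Finset.sum_eq_zero (fun x _ => hz x), mul_zero,
      Real.zero_rpow (one_div_ne_zero hr0.ne')]
    have ht' : 0 ≤ t := by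
      rw [htdef]
      exact Real.rpow_nonneg
        (mul_nonneg hC0 (Finset.sum_nonneg fun x _ => Real.rpow_nonneg (norm_nonneg _) _)) _
    exact mul_nonneg (mul_nonneg (by positivity) (Real.log_nonneg (by linarith))) ht'
  · push_neg at hf0
    obtain ⟨x0, hx0⟩ := hf0
    have hsum0 : 0 < ∑ x : Fin d → F, ‖f x‖ ^ p := by
      have h1 : 0 < ‖f x0‖ ^ p := Real.rpow_pos_of_pos (norm_pos_iff.mpr hx0) _
      have h2 := Finset.single_le_sum (f := fun x : Fin d → F => ‖f x‖ ^ p)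
        (fun i _ => Real.rpow_nonneg (norm_nonneg _) _) (Finset.mem_univ x0)
      linarith
    have ht0 : 0 < t := by
      rw [htdef]
      exact Real.rpow_pos_of_pos (by positivity) _
    have htp : t ^ p = N⁻¹ * ∑ x : Fin d → F, ‖f x‖ ^ p := by
      rw [htdef, ← Real.rpow_mul (by positivity), one_div_mul_cancel hp0.ne', Real.rpow_one]
    have hsum_eq : ∑ x : Fin d → F, ‖f x‖ ^ p = N * t ^ p := by
      rw [htp]; field_simp
    set K : ℕ := ⌈Real.logb 2 Q⌉₊ with hKdef
    set J : ℕ := d * K with hJdef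
    clear_value K J
    have h2K : Q ≤ (2:ℝ) ^ K := by
      calc Q = (2:ℝ) ^ Real.logb 2 Q := (Real.rpow_logb (by norm_num) (by norm_num) hQ0).symm
        _ ≤ (2:ℝ) ^ (K:ℝ) := by
            rw [hKdef]
            exact Real.rpow_le_rpow_of_exponent_le one_le_two (Nat.le_ceil _)
        _ = (2:ℝ) ^ K := Real.rpow_natCast 2 K
    have hJpow : N ^ ((1:ℝ)/p) ≤ (2:ℝ) ^ J := by
      have h1 : N ^ ((1:ℝ)/p) ≤ N ^ (1:ℝ) :=
        Real.rpow_le_rpow_of_exponent_le hN1 (by rw [div_le_one hp0]; exact hp)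
      rw [Real.rpow_one] at h1
      refine le_trans h1 ?_
      calc N = Q ^ d := hNdef
        _ ≤ ((2:ℝ)^K)^d := pow_le_pow_left₀ hQ0.le h2K d
        _ = (2:ℝ) ^ J := by rw [← pow_mul, hJdef, Nat.mul_comm]
    have hKlog : (K:ℝ) * Real.log 2 ≤ 2 * Real.log Q := by
      have h1 : (K:ℝ) ≤ Real.logb 2 Q + 1 := by
        rw [hKdef]
        exact (Nat.ceil_lt_add_one (Real.logb_nonneg one_lt_two (by linarith))).le
      have h2 : (1:ℝ) ≤ Real.logb 2 Q := by
        rw [Real.le_logb_iff_rpow_le one_lt_two hQ0]; simpa using hQ2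
      have h3 : Real.logb 2 Q * Real.log 2 = Real.log Q := by
        rw [Real.logb]; field_simp
      nlinarith
    have hMt : ∀ x : Fin d → F, ‖f x‖ ≤ 2 ^ J * t := by
      intro x
      have h1 : ‖f x‖ ^ p ≤ N * t ^ p := by
        rw [← hsum_eq]
        exact Finset.single_le_sum (f := fun x : Fin d → F => ‖f x‖ ^ p)
          (fun i _ => Real.rpow_nonneg (norm_nonneg _) _) (Finset.mem_univ x)
      have h2 := Real.rpow_le_rpow (Real.rpow_nonneg (norm_nonneg _) _) h1
        (by positivity : (0:ℝ) ≤ 1/p)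
      rw [hcanp _ (norm_nonneg _), Real.mul_rpow hN0.le (Real.rpow_nonneg ht0.le _),
        hcanp t ht0.le] at h2
      exact le_trans h2 (mul_le_mul_of_nonneg_right hJpow ht0.le)
    set E : ℕ → Finset (Fin d → F) := fun j =>
      Finset.univ.filter (fun x => 2^j * t < ‖f x‖ ∧ ‖f x‖ ≤ 2^(j+1) * t) with hEdef
    set g : (Fin d → F) → ℂ := fun x => if ‖f x‖ ≤ t then f x else 0 with hgdef
    set h : ℕ → (Fin d → F) → ℂ := fun j x => if x ∈ E j then f x else 0 with hhdef
    clear_value E g h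
    have hmemE : ∀ j (z : Fin d → F), z ∈ E j ↔ (2^j * t < ‖f z‖ ∧ ‖f z‖ ≤ 2^(j+1) * t) := by
      intro j z
      rw [hEdef]
      simp [Finset.mem_filter]
    have hdecomp : ∀ x : Fin d → F, f x = g x + ∑ j ∈ Finset.range J, h j x := by
      intro x
      by_cases hx : ‖f x‖ ≤ t
      · have hzz : ∀ j ∈ Finset.range J, h j x = 0 := by
          intro j _
          rw [hhdef]
          simp only
          rw [if_neg]
          rw [hmemE]
          rintro ⟨h1, -⟩
          have h2 : (1:ℝ) ≤ 2^j := one_le_pow₀ one_le_two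
          nlinarith
        rw [Finset.sum_eq_zero hzz, add_zero, hgdef]
        simp only
        rw [if_pos hx]
      · push_neg at hx
        have hgz : g x = 0 := by rw [hgdef]; simp only; rw [if_neg (not_le.mpr hx)]
        have hP0 : 2^(0:ℕ) * t < ‖f x‖ := by simpa using hx
        set P : ℕ → Prop := fun j => 2^j * t < ‖f x‖ with hPdef
        have hP0' : P 0 := hP0
        have hPJ : ¬ P J := not_lt.mpr (hMt x)
        set j0 := Nat.findGreatest P J with hj0def
        have hj0P : P j0 := Nat.findGreatest_spec (Nat.zero_le J) hP0'
        have hj0le : j0 ≤ J := Nat.findGreatest_le J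
        have hj0lt : j0 < J := lt_of_le_of_ne hj0le (fun hh => hPJ (hh ▸ hj0P))
        have hj0up : ‖f x‖ ≤ 2^(j0+1) * t := by
          by_contra hcon
          push_neg at hcon
          exact Nat.findGreatest_is_greatest (lt_add_one j0) (by omega) hcon
        have hxmem : x ∈ E j0 := (hmemE j0 x).mpr ⟨hj0P, hj0up⟩
        have hsum : ∑ j ∈ Finset.range J, h j x = f x := by
          rw [Finset.sum_eq_single_of_mem j0 (Finset.mem_range.mpr hj0lt)]
          · rw [hhdef]; simp only; rw [if_pos hxmem]
          · intro j hj hne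
            rw [hhdef]; simp only; rw [if_neg]
            rw [hmemE]
            rintro ⟨hm1, hm2⟩
            have h1 : j ≤ j0 := Nat.le_findGreatest (le_of_lt (Finset.mem_range.mp hj)) hm1
            have h2 : j0 ≤ j := by
              by_contra hcon
              push_neg at hcon
              have hle : (2:ℝ)^(j+1) ≤ 2^j0 := pow_le_pow_right₀ one_le_two hcon
              nlinarith [hj0P]
            exact hne (le_antisymm h1 h2)
        rw [hgz, zero_add, hsum]
    have hnormS : ‖((S.card : ℕ) : ℂ)‖ = (S.card : ℝ) := by simp
    have hScard : (0:ℝ) < (S.card : ℝ) := by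
      exact_mod_cast Finset.card_pos.mpr hS
    have hind : ∀ (Ej : Finset (Fin d → F)) (x : Fin d → F),
        ‖(S.card : ℂ)⁻¹ * ∑ y ∈ S, (if x - y ∈ Ej then (1:ℂ) else 0)‖
          = (S.card : ℝ)⁻¹ * ∑ y ∈ S, (if x - y ∈ Ej then (1:ℝ) else 0) := by
      intro Ej x
      rw [norm_mul, norm_inv, hnormS, Finset.sum_boole, Finset.sum_boole]
      simp
    have hptw : ∀ x : Fin d → F,
        ‖(S.card : ℂ)⁻¹ * ∑ y ∈ S, f (x - y)‖ ≤
          ‖(S.card : ℂ)⁻¹ * ∑ y ∈ S, g (x - y)‖ +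
            ∑ j ∈ Finset.range J, ‖(S.card : ℂ)⁻¹ * ∑ y ∈ S, h j (x - y)‖ := by
      intro x
      have hsum2 : ∑ y ∈ S, f (x - y) =
          (∑ y ∈ S, g (x - y)) + ∑ j ∈ Finset.range J, ∑ y ∈ S, h j (x - y) := by
        calc ∑ y ∈ S, f (x - y)
            = ∑ y ∈ S, (g (x - y) + ∑ j ∈ Finset.range J, h j (x - y)) :=
              Finset.sum_congr rfl fun y _ => hdecomp (x - y)
          _ = (∑ y ∈ S, g (x - y)) + ∑ y ∈ S, ∑ j ∈ Finset.range J, h j (x - y) :=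
              Finset.sum_add_distrib
          _ = (∑ y ∈ S, g (x - y)) + ∑ j ∈ Finset.range J, ∑ y ∈ S, h j (x - y) := by
              rw [Finset.sum_comm]
      rw [hsum2, mul_add]
      refine le_trans (norm_add_le _ _) (add_le_add_right ?_ _)
      rw [Finset.mul_sum]
      exact norm_sum_le _ _
    have hgle : ∀ z : Fin d → F, ‖g z‖ ≤ t := by
      intro z
      rw [hgdef]
      simp only
      split
      · assumption
      · simpa using ht0.le
    have hg_pt : ∀ x : Fin d → F, ‖(S.card:ℂ)⁻¹ * ∑ y ∈ S, g (x - y)‖ ≤ t := by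
      intro x
      calc ‖(S.card:ℂ)⁻¹ * ∑ y ∈ S, g (x-y)‖
          = (S.card:ℝ)⁻¹ * ‖∑ y ∈ S, g (x-y)‖ := by rw [norm_mul, norm_inv, hnormS]
        _ ≤ (S.card:ℝ)⁻¹ * ∑ y ∈ S, ‖g (x-y)‖ :=
            mul_le_mul_of_nonneg_left (norm_sum_le _ _) (inv_nonneg.mpr hScard.le)
        _ ≤ (S.card:ℝ)⁻¹ * ∑ y ∈ S, t :=
            mul_le_mul_of_nonneg_left (Finset.sum_le_sum fun y _ => hgle _) (inv_nonneg.mpr hScard.le)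
        _ = t := by rw [Finset.sum_const, nsmul_eq_mul, ← mul_assoc, inv_mul_cancel₀ hScard.ne', one_mul]
    have hcardfun : ((Fintype.card (Fin d → F) : ℕ) : ℝ) = N := by
      rw [hNdef, hQdef]
      norm_cast
      simp [Fintype.card_fun]
    have hg_bound : (N⁻¹ * ∑ x : Fin d → F,
        ‖(S.card:ℂ)⁻¹ * ∑ y ∈ S, g (x-y)‖ ^ r) ^ ((1:ℝ)/r) ≤ t := by
      refine le_trans (aux17_mono hC0 hr0
        (a := fun x : Fin d → F => ‖(S.card:ℂ)⁻¹ * ∑ y ∈ S, g (x-y)‖)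
        (b := fun _ => t) (fun x => norm_nonneg _) hg_pt) ?_
      rw [Finset.sum_const, Finset.card_univ, nsmul_eq_mul, hcardfun, ← mul_assoc,
        inv_mul_cancel₀ hN0.ne', one_mul, hcanr t ht0.le]
    have hh_bound : ∀ j ∈ Finset.range J,
        (N⁻¹ * ∑ x : Fin d → F, ‖(S.card:ℂ)⁻¹ * ∑ y ∈ S, h j (x-y)‖ ^ r) ^ ((1:ℝ)/r)
          ≤ 2 * C * t := by
      intro j _
      have hk0 : (0:ℝ) ≤ 2^(j+1) * t := by positivity
      have hzz : ∀ z : Fin d → F, ‖h j z‖ ≤ 2^(j+1) * t * (if z ∈ E j then (1:ℝ) else 0) := by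
        intro z
        rw [hhdef]
        simp only
        by_cases hm : z ∈ E j
        · rw [if_pos hm, if_pos hm, mul_one]
          exact ((hmemE j z).mp hm).2
        · rw [if_neg hm, if_neg hm, mul_zero, norm_zero]
      have hpt : ∀ x : Fin d → F, ‖(S.card:ℂ)⁻¹ * ∑ y ∈ S, h j (x-y)‖ ≤
          2^(j+1) * t * ‖(S.card:ℂ)⁻¹ * ∑ y ∈ S, (if x - y ∈ E j then (1:ℂ) else 0)‖ := by
        intro x
        rw [hind (E j) x]
        calc ‖(S.card:ℂ)⁻¹ * ∑ y ∈ S, h j (x-y)‖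
            = (S.card:ℝ)⁻¹ * ‖∑ y ∈ S, h j (x-y)‖ := by rw [norm_mul, norm_inv, hnormS]
          _ ≤ (S.card:ℝ)⁻¹ * ∑ y ∈ S, ‖h j (x-y)‖ :=
              mul_le_mul_of_nonneg_left (norm_sum_le _ _) (inv_nonneg.mpr hScard.le)
          _ ≤ (S.card:ℝ)⁻¹ * ∑ y ∈ S, 2^(j+1) * t * (if x - y ∈ E j then (1:ℝ) else 0) :=
              mul_le_mul_of_nonneg_left (Finset.sum_le_sum fun y _ => hzz _) (inv_nonneg.mpr hScard.le)
          _ = 2^(j+1) * t * ((S.card:ℝ)⁻¹ * ∑ y ∈ S, (if x - y ∈ E j then (1:ℝ) else 0)) := by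
              rw [Finset.mul_sum, Finset.mul_sum, Finset.mul_sum]
              refine Finset.sum_congr rfl fun y _ => by ring
      have step1 : (N⁻¹ * ∑ x : Fin d → F, ‖(S.card:ℂ)⁻¹ * ∑ y ∈ S, h j (x-y)‖ ^ r) ^ ((1:ℝ)/r)
          ≤ 2^(j+1) * t * (N⁻¹ * ∑ x : Fin d → F,
            ‖(S.card:ℂ)⁻¹ * ∑ y ∈ S, (if x - y ∈ E j then (1:ℂ) else 0)‖ ^ r) ^ ((1:ℝ)/r) := by
        refine le_trans (aux17_mono hC0 hr0
          (a := fun x : Fin d → F => ‖(S.card:ℂ)⁻¹ * ∑ y ∈ S, h j (x-y)‖)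
          (b := fun x : Fin d → F => 2^(j+1) * t *
            ‖(S.card:ℂ)⁻¹ * ∑ y ∈ S, (if x - y ∈ E j then (1:ℂ) else 0)‖)
          (fun x => norm_nonneg _) hpt) ?_
        rw [aux17_scale hC0 hr0 hk0 _ (fun x => norm_nonneg _)]
      have hREj : (N⁻¹ * ∑ x : Fin d → F, ‖(if x ∈ E j then (1:ℂ) else 0)‖ ^ p)
          = N⁻¹ * ((E j).card : ℝ) := by
        congr 1
        calc ∑ x : Fin d → F, ‖(if x ∈ E j then (1:ℂ) else 0)‖ ^ p
            = ∑ x : Fin d → F, (if x ∈ E j then (1:ℝ) else 0) := by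
              refine Finset.sum_congr rfl fun x _ => ?_
              by_cases hm : x ∈ E j
              · rw [if_pos hm, if_pos hm, norm_one, Real.one_rpow]
              · rw [if_neg hm, if_neg hm, norm_zero, Real.zero_rpow hp0.ne']
          _ = ((E j).card : ℝ) := by rw [Finset.sum_boole]; simp
      have step2 := hyp (E j)
      rw [hREj] at step2
      have h2' : (N⁻¹ * ((E j).card : ℝ)) * (2^j * t) ^ p ≤ t ^ p := by
        have hcard : (((E j).card : ℝ)) * (2^j * t) ^ p ≤ N * t ^ p := by
          rw [← hsum_eq]
          calc (((E j).card : ℝ)) * (2^j * t) ^ p = ∑ _x ∈ E j, (2^j * t) ^ p := by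
                rw [Finset.sum_const, nsmul_eq_mul]
            _ ≤ ∑ x ∈ E j, ‖f x‖ ^ p := by
                refine Finset.sum_le_sum fun x hx => ?_
                exact Real.rpow_le_rpow (by positivity) ((hmemE j x).mp hx).1.le hp0.le
            _ ≤ ∑ x : Fin d → F, ‖f x‖ ^ p :=
                Finset.sum_le_sum_of_subset_of_nonneg (Finset.subset_univ _)
                  (fun x _ _ => Real.rpow_nonneg (norm_nonneg _) _)
        calc (N⁻¹ * ((E j).card : ℝ)) * (2^j * t) ^ p
            = N⁻¹ * ((((E j).card : ℝ)) * (2^j * t) ^ p) := by ring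
          _ ≤ N⁻¹ * (N * t ^ p) := mul_le_mul_of_nonneg_left hcard hC0
          _ = t ^ p := by field_simp
      have hkey : 2^j * t * (N⁻¹ * ((E j).card : ℝ)) ^ ((1:ℝ)/p) ≤ t := by
        have hEc0 : (0:ℝ) ≤ N⁻¹ * ((E j).card : ℝ) := mul_nonneg hC0 (Nat.cast_nonneg _)
        calc 2^j * t * (N⁻¹ * ((E j).card : ℝ)) ^ ((1:ℝ)/p)
            = ((N⁻¹ * ((E j).card : ℝ)) * (2^j * t) ^ p) ^ ((1:ℝ)/p) := by
              rw [Real.mul_rpow hEc0 (Real.rpow_nonneg (by positivity) _),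
                hcanp (2^j * t) (by positivity)]
              ring
          _ ≤ (t ^ p) ^ ((1:ℝ)/p) :=
              Real.rpow_le_rpow (mul_nonneg hEc0 (Real.rpow_nonneg (by positivity) _)) h2' (by positivity)
          _ = t := hcanp t ht0.le
      calc (N⁻¹ * ∑ x : Fin d → F, ‖(S.card:ℂ)⁻¹ * ∑ y ∈ S, h j (x-y)‖ ^ r) ^ ((1:ℝ)/r)
          ≤ 2^(j+1) * t * (N⁻¹ * ∑ x : Fin d → F,
            ‖(S.card:ℂ)⁻¹ * ∑ y ∈ S, (if x - y ∈ E j then (1:ℂ) else 0)‖ ^ r) ^ ((1:ℝ)/r) :=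
            step1
        _ ≤ 2^(j+1) * t * (C * (N⁻¹ * ((E j).card : ℝ)) ^ ((1:ℝ)/p)) :=
            mul_le_mul_of_nonneg_left step2 hk0
        _ = 2 * C * (2^j * t * (N⁻¹ * ((E j).card : ℝ)) ^ ((1:ℝ)/p)) := by
            rw [pow_succ]; ring
        _ ≤ 2 * C * t := mul_le_mul_of_nonneg_left hkey (by positivity)
    have final : t + (J:ℝ) * (2*C*t) ≤ (1 + 4*C*(d:ℝ))/Real.log 2 * Real.log Q * t := by
      have hJlog : (J:ℝ) * Real.log 2 ≤ 2 * (d:ℝ) * Real.log Q := by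
        have hJc : (J:ℝ) = (d:ℝ) * (K:ℝ) := by rw [hJdef]; push_cast; ring
        rw [hJc]
        calc (d:ℝ) * (K:ℝ) * Real.log 2 = (d:ℝ) * ((K:ℝ) * Real.log 2) := by ring
          _ ≤ (d:ℝ) * (2 * Real.log Q) :=
              mul_le_mul_of_nonneg_left hKlog (Nat.cast_nonneg d)
          _ = 2 * (d:ℝ) * Real.log Q := by ring
      rw [div_mul_eq_mul_div, div_mul_eq_mul_div, le_div_iff₀ hlog2]
      nlinarith [mul_le_mul_of_nonneg_left hJlog (by positivity : (0:ℝ) ≤ 2*C*t),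
        mul_le_mul_of_nonneg_left hL ht0.le]
    calc (N⁻¹ * ∑ x : Fin d → F, ‖(S.card : ℂ)⁻¹ * ∑ y ∈ S, f (x - y)‖ ^ r) ^ ((1:ℝ)/r)
        ≤ (N⁻¹ * ∑ x : Fin d → F, (‖(S.card : ℂ)⁻¹ * ∑ y ∈ S, g (x - y)‖ +
            ∑ j ∈ Finset.range J, ‖(S.card : ℂ)⁻¹ * ∑ y ∈ S, h j (x - y)‖) ^ r) ^ ((1:ℝ)/r) :=
          aux17_mono hC0 hr0 (fun x => norm_nonneg _) hptw
      _ ≤ (N⁻¹ * ∑ x : Fin d → F, ‖(S.card:ℂ)⁻¹ * ∑ y ∈ S, g (x-y)‖ ^ r) ^ ((1:ℝ)/r)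
            + (N⁻¹ * ∑ x : Fin d → F, (∑ j ∈ Finset.range J,
              ‖(S.card:ℂ)⁻¹ * ∑ y ∈ S, h j (x-y)‖) ^ r) ^ ((1:ℝ)/r) :=
          aux17_mink2 hC0 hr _ _ (fun x => norm_nonneg _)
            (fun x => Finset.sum_nonneg fun j _ => norm_nonneg _)
      _ ≤ t + ∑ j ∈ Finset.range J,
            (N⁻¹ * ∑ x : Fin d → F, ‖(S.card:ℂ)⁻¹ * ∑ y ∈ S, h j (x-y)‖ ^ r) ^ ((1:ℝ)/r) :=
          add_le_add hg_bound (aux17_minkN hC0 hr J _ (fun j x => norm_nonneg _))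
      _ ≤ t + ∑ _j ∈ Finset.range J, 2 * C * t :=
          add_le_add_right (Finset.sum_le_sum hh_bound) t
      _ = t + (J:ℝ) * (2 * C * t) := by
          rw [Finset.sum_const, Finset.card_range, nsmul_eq_mul]
      _ ≤ (1 + 4*C*(d:ℝ))/Real.log 2 * Real.log Q * t := final
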